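/- Let n, l ≥ 1, 1 ≤ p,q ≤ n, and r ≥ 1. Then in U(Q(n))^{⊗l}: Σ_{s+t=r, s,t ≥ 0} Σ_{j=1}^{n} ((−1)^s z_{j,p}^{(s)} + (−1)^r z_{−j,p}^{(s)}) · (z̃_{q,j}^{(t)} + z̃_{−q,j}^{(t)}) = 0. -/

import Mathlib

noncomputable section
open scoped Classical

/-! # The universal enveloping superalgebra `U(Q(n))` of the queer Lie superalgebra

`U(Q(n))` is presented by even generators `e i j` and odd generators `f i j`
(`1 ≤ i,j ≤ n`) subject to the relations
`[e i j, e k l] = δ_{jk} e i l - δ_{li} e k j`,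
`[e i j, f k l] = δ_{jk} f i l - δ_{li} f k j`,
`f i j * f k l + f k l * f i j = δ_{jk} e i l + δ_{li} e k j`. -/

/-- Generators of `U(Q(n))`: `E i j` (even) and `F i j` (odd). -/
inductive QGen (n : ℕ) : Type
  | E : Fin n → Fin n → QGen n
  | F : Fin n → Fin n → QGen n

/-- Kronecker delta. -/
def kd {n : ℕ} (i j : Fin n) : ℂ := if i = j then 1 else 0

/-- The defining relations of `U(Q(n))`. -/
inductive QRel (n : ℕ) : FreeAlgebra ℂ (QGen n) → FreeAlgebra ℂ (QGen n) → Prop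
  | ee (i j k l : Fin n) : QRel n
      (FreeAlgebra.ι ℂ (QGen.E i j) * FreeAlgebra.ι ℂ (QGen.E k l) -
        FreeAlgebra.ι ℂ (QGen.E k l) * FreeAlgebra.ι ℂ (QGen.E i j))
      (kd j k • FreeAlgebra.ι ℂ (QGen.E i l) - kd l i • FreeAlgebra.ι ℂ (QGen.E k j))
  | ef (i j k l : Fin n) : QRel n
      (FreeAlgebra.ι ℂ (QGen.E i j) * FreeAlgebra.ι ℂ (QGen.F k l) -
        FreeAlgebra.ι ℂ (QGen.F k l) * FreeAlgebra.ι ℂ (QGen.E i j))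
      (kd j k • FreeAlgebra.ι ℂ (QGen.F i l) - kd l i • FreeAlgebra.ι ℂ (QGen.F k j))
  | ff (i j k l : Fin n) : QRel n
      (FreeAlgebra.ι ℂ (QGen.F i j) * FreeAlgebra.ι ℂ (QGen.F k l) +
        FreeAlgebra.ι ℂ (QGen.F k l) * FreeAlgebra.ι ℂ (QGen.F i j))
      (kd j k • FreeAlgebra.ι ℂ (QGen.E i l) + kd l i • FreeAlgebra.ι ℂ (QGen.E k j))

/-- The universal enveloping superalgebra `U(Q(n))`. -/
abbrev UQ (n : ℕ) := RingQuot (QRel n)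

/-- The generator `e i j` of `U(Q(n))`. -/
def Ue {n : ℕ} (i j : Fin n) : UQ n :=
  RingQuot.mkAlgHom ℂ (QRel n) (FreeAlgebra.ι ℂ (QGen.E i j))

/-- The generator `f i j` of `U(Q(n))`. -/
def Uf {n : ℕ} (i j : Fin n) : UQ n :=
  RingQuot.mkAlgHom ℂ (QRel n) (FreeAlgebra.ι ℂ (QGen.F i j))

/-- Sergeev's elements `e_{ij}^{(m)}` and `f_{ij}^{(m)}` of `U(Q(n))`, defined recursively by
`e^{(0)} = δ`, `f^{(0)} = 0`,
`e_{ij}^{(m)} = Σ_k e_{ik} e_{kj}^{(m-1)} + (-1)^{m+1} Σ_k f_{ik} f_{kj}^{(m-1)}`,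
`f_{ij}^{(m)} = Σ_k e_{ik} f_{kj}^{(m-1)} + (-1)^{m+1} Σ_k f_{ik} e_{kj}^{(m-1)}`. -/
def efU (n : ℕ) : ℕ → (Fin n → Fin n → UQ n) × (Fin n → Fin n → UQ n)
  | 0 => (fun i j => algebraMap ℂ (UQ n) (kd i j), fun _ _ => 0)
  | m + 1 =>
      (fun i j => (∑ k, Ue i k * (efU n m).1 k j) +
        (-1 : ℂ) ^ m • ∑ k, Uf i k * (efU n m).2 k j,
       fun i j => (∑ k, Ue i k * (efU n m).2 k j) +
        (-1 : ℂ) ^ m • ∑ k, Uf i k * (efU n m).1 k j)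

/-- `e_{ij}^{(m)}`. -/
def eU {n : ℕ} (m : ℕ) (i j : Fin n) : UQ n := (efU n m).1 i j
/-- `f_{ij}^{(m)}`. -/
def fU {n : ℕ} (m : ℕ) (i j : Fin n) : UQ n := (efU n m).2 i j

/-- For `l ∣ n`, the index `l(p-1)+i` of `{1,…,n}` (0-based: block `p`, position `i`). -/
def bidx {n l : ℕ} (h : l ∣ n) (p : Fin (n / l)) (i : Fin l) : Fin n :=
  ⟨l * p.val + i.val, by
    have h1 : i.val < l := i.isLt
    have h2 : p.val + 1 ≤ n / l := p.isLt
    have h3 : l * (p.val + 1) ≤ l * (n / l) := Nat.mul_le_mul_left l h2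
    have h4 : n / l * l ≤ n := Nat.div_mul_le_self n l
    have h5 : l * (p.val + 1) = l * p.val + l := Nat.mul_succ l p.val
    have h6 : l * (n / l) = n / l * l := Nat.mul_comm l (n / l)
    omega⟩
set_option linter.unusedVariables false

/-! # The character `χ`, the left ideal `I_χ` and the finite W-algebra data

Here `l ∣ n` and `χ` corresponds to the even nilpotent element of `Q(n)` all of whose
Jordan blocks have size `l`.  The subalgebra `m = ⊕_{j<0} g_j` is spanned by the
elements `e_{l(p-1)+i+k, l(q-1)+i}` and `f_{l(p-1)+i+k, l(q-1)+i}` (`k ≥ 1`), and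
`χ(e_{l(p-1)+i+1, l(q-1)+i}) = δ_{pq}` and `χ = 0` on the other basis elements. -/

/-- The set of elements `a - χ(a)` for `a` ranging over the standard basis of `m`;
(rows/columns written 0-based: `a` is the position of the row inside its block `p`,
`b` the position of the column inside its block `q`, with `b < a`). -/
def mSet (n l : ℕ) (h : l ∣ n) : Set (UQ n) :=
  { x : UQ n | ∃ (p q : Fin (n / l)) (a b : Fin l), b.val < a.val ∧
      (x = Ue (bidx h p a) (bidx h q b) -
            algebraMap ℂ (UQ n) (if a.val = b.val + 1 ∧ p = q then 1 else 0) ∨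
       x = Uf (bidx h p a) (bidx h q b)) }

/-- The left ideal `I_χ` of `U(Q(n))` generated by the `a - χ(a)`, `a ∈ m`. -/
def Ichi (n l : ℕ) (h : l ∣ n) : Submodule (UQ n) (UQ n) :=
  Submodule.span (UQ n) (mSet n l h)

/-- The quotient `U(Q(n))/I_χ` (as a `ℂ`-vector space). -/
abbrev Wq (n l : ℕ) (h : l ∣ n) := UQ n ⧸ (Ichi n l h).restrictScalars ℂ

/-- The quotient map `π : U(Q(n)) → U(Q(n))/I_χ`. -/
def piq (n l : ℕ) (h : l ∣ n) : UQ n →ₗ[ℂ] Wq n l h :=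
  ((Ichi n l h).restrictScalars ℂ).mkQ

/-- `y` super-commutes with `m` into `I_χ`:  `[a, y] ∈ I_χ` for every `a` in the standard
basis of `m`.  Here the super-commutator of the odd element `f` with (the possibly
non-homogeneous) `y` is `f * y - σ(y) * f`, where `σ` is the parity involution of
`U(Q(n))` (the algebra automorphism fixing the `e`'s and negating the `f`'s). -/
def Wcond {n l : ℕ} (h : l ∣ n) (σ : UQ n →ₐ[ℂ] UQ n) (y : UQ n) : Prop :=
  ∀ (p q : Fin (n / l)) (a b : Fin l), b.val < a.val →
    (Ue (bidx h p a) (bidx h q b) * y - y * Ue (bidx h p a) (bidx h q b) ∈ Ichi n l h) ∧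
    (Uf (bidx h p a) (bidx h q b) * y - σ y * Uf (bidx h p a) (bidx h q b) ∈ Ichi n l h)

/-- The finite W-algebra `W_χ = {π(y) | [a, y] ∈ I_χ for all a ∈ m}`, as a subset of
`U(Q(n))/I_χ`.  (Its product is `π(y₁)·π(y₂) = π(y₁y₂)`.) -/
def WchiSet (n l : ℕ) (h : l ∣ n) (σ : UQ n →ₐ[ℂ] UQ n) : Set (Wq n l h) :=
  { w : Wq n l h | ∃ y : UQ n, Wcond h σ y ∧ piq n l h y = w }

/-- The standard basis elements of the parabolic subalgebra `p = ⊕_{j≥0} g_j`. -/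
def pSet (n l : ℕ) (h : l ∣ n) : Set (UQ n) :=
  { x : UQ n | ∃ (p q : Fin (n / l)) (a b : Fin l), a.val ≤ b.val ∧
      (x = Ue (bidx h p a) (bidx h q b) ∨ x = Uf (bidx h p a) (bidx h q b)) }

/-- The standard basis elements of the nilradical `n = ⊕_{j>0} g_j` of `p`. -/
def nSet (n l : ℕ) (h : l ∣ n) : Set (UQ n) :=
  { x : UQ n | ∃ (p q : Fin (n / l)) (a b : Fin l), a.val < b.val ∧
      (x = Ue (bidx h p a) (bidx h q b) ∨ x = Uf (bidx h p a) (bidx h q b)) }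

/-- The kernel of the Harish-Chandra projection `ϑ : U(p) → U(g₀)`, realized inside
`U(Q(n))`: the `ℂ`-span of `U(p)·n`.  (By the PBW theorem, `U(g) = U(p) ⊕ I_χ` and
`U(p) = U(g₀) ⊕ U(p)n`, so for `y ∈ U(g)`, `ϑ(pr(y)) = t` iff
`y - t ∈ I_χ + U(p)n`.) -/
def Lspan (n l : ℕ) (h : l ∣ n) : Submodule ℂ (UQ n) :=
  Submodule.span ℂ
    { x : UQ n | ∃ u ∈ Algebra.adjoin ℂ (pSet n l h), ∃ g ∈ nSet n l h, x = u * g }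

/-- A descriptor of a generator of `U(p)`:  `(b, p, q, a, c)` is
`e_{l(p-1)+(a+1), l(q-1)+(c+1)}` if `b = false` and `f_{…}` if `b = true`
(required: `a ≤ c`). -/
def pgElem {n l : ℕ} (h : l ∣ n) :
    Bool × Fin (n / l) × Fin (n / l) × Fin l × Fin l → UQ n
  | (b, p, q, a, c) => (if b then Uf else Ue) (bidx h p a) (bidx h q c)

/-- Kazhdan degree `2k+2` of a `p`-generator of block offset `k = c - a`. -/
def pgDeg {l m : ℕ} (d : Bool × Fin m × Fin m × Fin l × Fin l) : ℕ :=
  2 * (d.2.2.2.2.val - d.2.2.2.1.val) + 2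

/-- Weight `2k` of a `p`-generator of block offset `k = c - a`. -/
def pgWt {l m : ℕ} (d : Bool × Fin m × Fin m × Fin l × Fin l) : ℕ :=
  2 * (d.2.2.2.2.val - d.2.2.2.1.val)

/-- Monomials in the generators of `U(p)` which are "lower" than bidegree
(Kazhdan degree `D`, weight `W`): either of Kazhdan degree `< D`, or of Kazhdan
degree `≤ D` and weight `< W`. -/
def LowSet (n l : ℕ) (h : l ∣ n) (D W : ℕ) : Set (UQ n) :=
  { x : UQ n | ∃ L : List (Bool × Fin (n / l) × Fin (n / l) × Fin l × Fin l),
      (∀ d ∈ L, d.2.2.2.1.val ≤ d.2.2.2.2.val) ∧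
      x = (L.map (pgElem h)).prod ∧
      ((L.map pgDeg).sum < D ∨ ((L.map pgDeg).sum ≤ D ∧ (L.map pgWt).sum < W)) }

/-- The span of the "lower" monomials. -/
def LowSpan (n l : ℕ) (h : l ∣ n) (D W : ℕ) : Submodule ℂ (UQ n) :=
  Submodule.span ℂ (LowSet n l h D W)

/-! # The super tensor power `U(Q(m))^{⊗l}`

Modeled as the superalgebra with generators `x^i_{pq} = 1^{⊗(l-i)} ⊗ e_{pq} ⊗ 1^{⊗(i-1)}`
(even) and `ξ^i_{pq} = 1^{⊗(l-i)} ⊗ f_{pq} ⊗ 1^{⊗(i-1)}` (odd), subject to the `U(Q(m))`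
relations in each tensor slot and to (super-)commutation between different slots. -/

/-- Generators of `U(Q(m))^{⊗l}`: `X i p q` is `x^i_{pq}` and `Xi i p q` is `ξ^i_{pq}`
(`i : Fin l` is the 0-based tensor slot, counted from the right). -/
inductive TGen (m l : ℕ) : Type
  | X : Fin l → Fin m → Fin m → TGen m l
  | Xi : Fin l → Fin m → Fin m → TGen m l

/-- Kronecker delta on slots. -/
def kdl {l : ℕ} (i j : Fin l) : ℂ := if i = j then 1 else 0

/-- The defining relations of `U(Q(m))^{⊗l}`. -/
inductive TRel (m l : ℕ) : FreeAlgebra ℂ (TGen m l) → FreeAlgebra ℂ (TGen m l) → Prop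
  | xx (i i' : Fin l) (p q r s : Fin m) : TRel m l
      (FreeAlgebra.ι ℂ (TGen.X i p q) * FreeAlgebra.ι ℂ (TGen.X i' r s) -
        FreeAlgebra.ι ℂ (TGen.X i' r s) * FreeAlgebra.ι ℂ (TGen.X i p q))
      ((kdl i i' * kd q r) • FreeAlgebra.ι ℂ (TGen.X i p s) -
        (kdl i i' * kd s p) • FreeAlgebra.ι ℂ (TGen.X i' r q))
  | xxi (i i' : Fin l) (p q r s : Fin m) : TRel m l
      (FreeAlgebra.ι ℂ (TGen.X i p q) * FreeAlgebra.ι ℂ (TGen.Xi i' r s) -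
        FreeAlgebra.ι ℂ (TGen.Xi i' r s) * FreeAlgebra.ι ℂ (TGen.X i p q))
      ((kdl i i' * kd q r) • FreeAlgebra.ι ℂ (TGen.Xi i p s) -
        (kdl i i' * kd s p) • FreeAlgebra.ι ℂ (TGen.Xi i' r q))
  | xixi (i i' : Fin l) (p q r s : Fin m) : TRel m l
      (FreeAlgebra.ι ℂ (TGen.Xi i p q) * FreeAlgebra.ι ℂ (TGen.Xi i' r s) +
        FreeAlgebra.ι ℂ (TGen.Xi i' r s) * FreeAlgebra.ι ℂ (TGen.Xi i p q))
      ((kdl i i' * kd q r) • FreeAlgebra.ι ℂ (TGen.X i p s) +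
        (kdl i i' * kd s p) • FreeAlgebra.ι ℂ (TGen.X i' r q))

/-- The superalgebra `U(Q(m))^{⊗l}`. -/
abbrev TQ (m l : ℕ) := RingQuot (TRel m l)

/-- `x^i_{pq} := 1^{⊗(l-i)} ⊗ e_{pq} ⊗ 1^{⊗(i-1)} ∈ U(Q(m))^{⊗l}`. -/
def xT {m l : ℕ} (i : Fin l) (p q : Fin m) : TQ m l :=
  RingQuot.mkAlgHom ℂ (TRel m l) (FreeAlgebra.ι ℂ (TGen.X i p q))

/-- `ξ^i_{pq} := 1^{⊗(l-i)} ⊗ f_{pq} ⊗ 1^{⊗(i-1)} ∈ U(Q(m))^{⊗l}`. -/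
def xiT {m l : ℕ} (i : Fin l) (p q : Fin m) : TQ m l :=
  RingQuot.mkAlgHom ℂ (TRel m l) (FreeAlgebra.ι ℂ (TGen.Xi i p q))

/-! # The super-Yangian `Y(Q(n))` -/

/-- The index set `{±1, …, ±n}`:  `(false, a)` is the positive index `a` (even),
`(true, a)` is the negative index `-a` (odd). -/
abbrev QIdx (n : ℕ) := Bool × Fin n

/-- Negation `i ↦ -i` on indices. -/
def qneg {n : ℕ} (i : QIdx n) : QIdx n := (!i.1, i.2)

/-- The parity `p(i)`: `0` for positive `i`, `1` for negative `i`. -/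
def qpar {n : ℕ} (i : QIdx n) : ℕ := if i.1 then 1 else 0

/-- Kronecker delta on `{±1, …, ±n}`. -/
def kdq {n : ℕ} (i j : QIdx n) : ℂ := if i = j then 1 else 0

/-- Generators of `Y(Q(n))`: `T m i j` encodes `T^{(m+1)}_{i,j}`. -/
inductive YGen (n : ℕ) : Type
  | T : ℕ → QIdx n → QIdx n → YGen n

/-- `T^{(m)}_{i,j}` in the free algebra, with `T^{(0)}_{i,j} = δ_{ij}`. -/
def Tf {n : ℕ} : ℕ → QIdx n → QIdx n → FreeAlgebra ℂ (YGen n)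
  | 0, i, j => algebraMap ℂ _ (kdq i j)
  | m + 1, i, j => FreeAlgebra.ι ℂ (YGen.T m i j)

/-- The super-commutator `[T^{(a)}_{i,j}, T^{(b)}_{k,l}]` in the free algebra. -/
def ybr {n : ℕ} (a : ℕ) (i j : QIdx n) (b : ℕ) (k l : QIdx n) :
    FreeAlgebra ℂ (YGen n) :=
  Tf a i j * Tf b k l -
    ((-1 : ℂ) ^ ((qpar i + qpar j) * (qpar k + qpar l))) • (Tf b k l * Tf a i j)

/-- The defining relations of the super-Yangian `Y(Q(n))`: for `M, R ≥ 1`,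
`(-1)^{p(i)p(k)+p(i)p(l)+p(k)p(l)} ([T^{(M+1)}_{ij}, T^{(R-1)}_{kl}] - [T^{(M-1)}_{ij}, T^{(R+1)}_{kl}])
 = T^{(M)}_{kj}T^{(R-1)}_{il} + T^{(M-1)}_{kj}T^{(R)}_{il} - T^{(R-1)}_{kj}T^{(M)}_{il}
   - T^{(R)}_{kj}T^{(M-1)}_{il}
   + (-1)^{p(k)+p(l)} (-T^{(M)}_{-k,j}T^{(R-1)}_{-i,l} + T^{(M-1)}_{-k,j}T^{(R)}_{-i,l}
       + T^{(R-1)}_{k,-j}T^{(M)}_{i,-l} - T^{(R)}_{k,-j}T^{(M-1)}_{i,-l})`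
(here `M = m+1`, `R = r+1`), together with `T^{(m)}_{-i,-j} = (-1)^m T^{(m)}_{i,j}`. -/
inductive YRel (n : ℕ) : FreeAlgebra ℂ (YGen n) → FreeAlgebra ℂ (YGen n) → Prop
  | quad (m r : ℕ) (i j k l : QIdx n) : YRel n
      (((-1 : ℂ) ^ (qpar i * qpar k + qpar i * qpar l + qpar k * qpar l)) •
        (ybr (m + 2) i j r k l - ybr m i j (r + 2) k l))
      (Tf (m + 1) k j * Tf r i l + Tf m k j * Tf (r + 1) i l -
        Tf r k j * Tf (m + 1) i l - Tf (r + 1) k j * Tf m i l +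
        ((-1 : ℂ) ^ (qpar k + qpar l)) •
          (-(Tf (m + 1) (qneg k) j * Tf r (qneg i) l) +
            Tf m (qneg k) j * Tf (r + 1) (qneg i) l +
            Tf r k (qneg j) * Tf (m + 1) i (qneg l) -
            Tf (r + 1) k (qneg j) * Tf m i (qneg l)))
  | par (m : ℕ) (i j : QIdx n) : YRel n
      (Tf (m + 1) (qneg i) (qneg j)) (((-1 : ℂ) ^ (m + 1)) • Tf (m + 1) i j)

/-- The super-Yangian `Y(Q(n))`. -/
abbrev YQ (n : ℕ) := RingQuot (YRel n)

/-- The generator `T^{(m)}_{i,j}` of `Y(Q(n))` (with `T^{(0)}_{i,j} = δ_{ij}`). -/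
def TY {n : ℕ} (m : ℕ) (i j : QIdx n) : YQ n :=
  RingQuot.mkAlgHom ℂ (YRel n) (Tf m i j)

/-! # Values of the homomorphisms `U`, `ev`, `ēv` on the generators of `Y(Q(n))`,
and the explicit sums appearing in the main theorems. -/

/-- The value of the homomorphism `U : Y(Q(n)) → U(Q(n))` on the generator
`T^{(r)}_{i,j}`:  `U(T^{(r)}_{i,j}) = (-1)^r e^{(r)}_{j,i}`,
`U(T^{(r)}_{-i,j}) = (-1)^r f^{(r)}_{j,i}` for `i, j > 0`, and the values on the other
generators are forced by `T^{(r)}_{-i,-j} = (-1)^r T^{(r)}_{i,j}`. -/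
def Uval {n : ℕ} (r : ℕ) (i j : QIdx n) : UQ n :=
  (if j.1 then (-1 : ℂ) ^ r else 1) •
    ((-1 : ℂ) ^ r • (if xor i.1 j.1 then fU r j.2 i.2 else eU r j.2 i.2))

/-- The value of the evaluation homomorphism `ev : Y(Q(n)) → U(Q(n))` on `T^{(r)}_{i,j}`:
`ev(T^{(1)}_{i,j}) = -e_{j,i}`, `ev(T^{(1)}_{-i,j}) = -f_{j,i}` for `i, j > 0`,
`ev(T^{(0)}_{i,j}) = δ_{ij}` and `ev(T^{(r)}_{i,j}) = 0` for `r > 1` (with the values on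
the remaining generators forced by `T^{(r)}_{-i,-j} = (-1)^r T^{(r)}_{i,j}`). -/
def evval {n : ℕ} (r : ℕ) (i j : QIdx n) : UQ n :=
  (if j.1 then (-1 : ℂ) ^ r else 1) •
    (match r with
      | 0 => if xor i.1 j.1 then 0 else algebraMap ℂ (UQ n) (kd i.2 j.2)
      | 1 => -(if xor i.1 j.1 then Uf j.2 i.2 else Ue j.2 i.2)
      | _ + 2 => 0)

/-- The value of `ēv = α ∘ ev : Y(Q(n)) → U(Q(n))` on `T^{(r)}_{i,j}`, where `α` is the
principal anti-automorphism of `U(Q(n))`:  `ēv(T^{(1)}_{i,j}) = e_{j,i}`,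
`ēv(T^{(1)}_{-i,j}) = f_{j,i}` for `i, j > 0`, `ēv(T^{(0)}_{i,j}) = δ_{ij}`,
`ēv(T^{(r)}_{i,j}) = 0` for `r > 1`. -/
def bevval {n : ℕ} (r : ℕ) (i j : QIdx n) : UQ n :=
  (if j.1 then (-1 : ℂ) ^ r else 1) •
    (match r with
      | 0 => if xor i.1 j.1 then 0 else algebraMap ℂ (UQ n) (kd i.2 j.2)
      | 1 => (if xor i.1 j.1 then Uf j.2 i.2 else Ue j.2 i.2)
      | _ + 2 => 0)

/-- The sum `Σ_{p_1,…,p_{r-1}} Σ_{l ≥ i_1 ≥ i_2 ≥ … ≥ i_r ≥ 1}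
Π_{a=1}^r (x^{i_a}_{p_{a-1},p_a} + (-1)^{r-a} ξ^{i_a}_{p_{a-1},p_a})`
(with `p_0 = p`, `p_r = q`), an element of `U(Q(m))^{⊗l}`. -/
def chainProdDec (m l : ℕ) (r : ℕ) (p q : Fin m) : TQ m l :=
  ∑ c : Fin (r + 1) → Fin m, ∑ iv : Fin r → Fin l,
    (if c 0 = p ∧ c (Fin.last r) = q ∧ (∀ a b : Fin r, a ≤ b → iv b ≤ iv a)
      then (1 : ℂ) else 0) •
      (List.ofFn fun a : Fin r =>
        xT (iv a) (c a.castSucc) (c a.succ) +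
          ((-1 : ℂ) ^ (r - 1 - a.val)) • xiT (iv a) (c a.castSucc) (c a.succ)).prod

/-- The sum `Σ_{p_1,…,p_{r-1}} Σ_{1 ≤ i_1 < i_2 < … < i_r ≤ l}
Π_{a=1}^r (x^{i_a}_{p_{a-1},p_a} + (-1)^{r-a} ξ^{i_a}_{p_{a-1},p_a})`
(with `p_0 = p`, `p_r = q`), an element of `U(Q(m))^{⊗l}`. -/
def chainProdInc (m l : ℕ) (r : ℕ) (p q : Fin m) : TQ m l :=
  ∑ c : Fin (r + 1) → Fin m, ∑ iv : Fin r → Fin l,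
    (if c 0 = p ∧ c (Fin.last r) = q ∧ (∀ a b : Fin r, a < b → iv a < iv b)
      then (1 : ℂ) else 0) •
      (List.ofFn fun a : Fin r =>
        xT (iv a) (c a.castSucc) (c a.succ) +
          ((-1 : ℂ) ^ (r - 1 - a.val)) • xiT (iv a) (c a.castSucc) (c a.succ)).prod

/-- The elements `z^{(r)}_{±q,p}` of `U(Q(m))^{⊗l}`:  the even (`sgn = false`,
giving `z^{(r)}_{q,p}`) resp. odd (`sgn = true`, giving `z^{(r)}_{-q,p}`) component of
`chainProdDec`, computed using the parity involution `σT` of `U(Q(m))^{⊗l}`;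
`z^{(0)}_{q,p} = δ_{qp}`, `z^{(0)}_{-q,p} = 0`. -/
def zDec {m l : ℕ} (σT : TQ m l →ₐ[ℂ] TQ m l) :
    ℕ → Bool → Fin m → Fin m → TQ m l
  | 0, sgn, q, p => if sgn then 0 else algebraMap ℂ (TQ m l) (kd q p)
  | r + 1, sgn, q, p =>
      (2⁻¹ : ℂ) • (chainProdDec m l (r + 1) p q +
        (if sgn then (-1 : ℂ) else 1) • σT (chainProdDec m l (r + 1) p q))

/-- The elements `z̃^{(r)}_{±q,p}` of `U(Q(m))^{⊗l}` (as `zDec`, with increasing chains). -/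
def zInc {m l : ℕ} (σT : TQ m l →ₐ[ℂ] TQ m l) :
    ℕ → Bool → Fin m → Fin m → TQ m l
  | 0, sgn, q, p => if sgn then 0 else algebraMap ℂ (TQ m l) (kd q p)
  | r + 1, sgn, q, p =>
      (2⁻¹ : ℂ) • (chainProdInc m l (r + 1) p q +
        (if sgn then (-1 : ℂ) else 1) • σT (chainProdInc m l (r + 1) p q))

/-- The explicit formula for the antipode value `S(T^{(r)}_{i,j})` (`r ≥ 1`):
`S(T^{(r)}_{i,j}) = Σ_{m=1}^{r} (-1)^m Σ_{i_1,…,i_{m-1}} Σ_{r_1+⋯+r_m=r, r_a>0}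
(-1)^{ν(i,i_1,…,i_{m-1},j)} T^{(r_1)}_{i,i_1} ⋯ T^{(r_m)}_{i_{m-1},j}` where
`ν(i_0,…,i_m) = Σ_{0≤k<s≤m-1} (p(i_k)+p(i_{k+1}))(p(i_s)+p(i_{s+1}))`. -/
def STval {n : ℕ} (r : ℕ) (i j : QIdx n) : YQ n :=
  ∑ m : Fin r,
    ((-1 : ℂ) ^ (m.val + 1)) •
      ∑ ch : Fin (m.val + 2) → QIdx n, ∑ c : Fin (m.val + 1) → Fin (r + 1),
        (if ch 0 = i ∧ ch (Fin.last (m.val + 1)) = j ∧ (∀ a, 1 ≤ (c a).val) ∧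
              (∑ a, (c a).val) = r
          then ((-1 : ℂ) ^ (∑ a : Fin (m.val + 1), ∑ b : Fin (m.val + 1),
              if a < b then
                (qpar (ch a.castSucc) + qpar (ch a.succ)) *
                  (qpar (ch b.castSucc) + qpar (ch b.succ))
              else 0))
          else 0) •
        (List.ofFn fun a : Fin (m.val + 1) =>
          TY (c a).val (ch a.castSucc) (ch a.succ)).prod


namespace S19
open Finset

/-! ### Generic helpers -/

lemma ind_smul {P : Prop} [Decidable P] {A : Type*} [AddCommMonoid A] [Module ℂ A] (x : A) :
    (if P then (1:ℂ) else 0) • x = if P then x else 0 := by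
  split <;> simp

lemma indmul {P Q : Prop} [Decidable P] [Decidable Q] {A : Type*} [AddCommMonoid A]
    [Module ℂ A] (x : A) :
    (if P then (1:ℂ) else 0) • ((if Q then (1:ℂ) else 0) • x) = if P ∧ Q then x else 0 := by
  by_cases hP : P <;> by_cases hQ : Q <;> simp [hP, hQ]

lemma ofFn_val_eq {α : Type*} (g : ℕ → α) {m m' : ℕ} (h : m = m') :
    List.ofFn (fun b : Fin m => g b.val) = List.ofFn (fun b : Fin m' => g b.val) := by
  subst h; rfl

lemma prod_ofFn_split {A : Type*} [Monoid A] {s m : ℕ} (h : m ≤ s) (f : Fin s → A) :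
    (List.ofFn f).prod =
      (List.ofFn fun a : Fin m => f (Fin.castLE h a)).prod *
      (List.ofFn fun b : Fin (s - m) =>
        (fun v : ℕ => if hv : v < s then f ⟨v, hv⟩ else 1) (m + b.val)).prod := by
  obtain ⟨k, rfl⟩ : ∃ k, s = m + k := ⟨s - m, by omega⟩
  rw [List.ofFn_add, List.prod_append]
  congr 1
  have h1 : (List.ofFn fun j : Fin k => f (Fin.natAdd m j)) = List.ofFn fun j : Fin k =>
        (fun v : ℕ => if hv : v < m + k then f ⟨v, hv⟩ else 1) (m + j.val) := by
      congr 1; funext j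
      have hv : m + j.val < m + k := by omega
      show f (Fin.natAdd m j) = if hv' : m + j.val < m + k then f ⟨m + j.val, hv'⟩ else 1
      rw [dif_pos hv]
      exact congrArg f (Fin.ext rfl)
  rw [h1]
  exact congrArg List.prod
    (ofFn_val_eq (fun v : ℕ => if hv : m + v < m + k then f ⟨m + v, hv⟩ else 1)
      (show k = m + k - m by omega))

variable {n l : ℕ}

abbrev MM (n l : ℕ) := Matrix (Fin n) (Fin n) (TQ n l)

/-- The matrix with entries `x^i_{pq} + (-1)^k ξ^i_{pq}`. -/
def Gm (i : Fin l) (k : ℕ) : MM n l :=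
  Matrix.of fun p q => xT i p q + ((-1 : ℂ) ^ k) • xiT i p q

lemma Gm_apply (i : Fin l) (k : ℕ) (p q : Fin n) :
    Gm i k p q = xT i p q + ((-1 : ℂ) ^ k) • xiT i p q := rfl

variable (σT : TQ n l →ₐ[ℂ] TQ n l)

/-- Entrywise application of `σT^t` to a matrix. -/
def sgM (t : ℕ) : MM n l →ₐ[ℂ] MM n l := AlgHom.mapMatrix (σT ^ t)

lemma sgM_apply (t : ℕ) (X : MM n l) (p q : Fin n) :
    sgM σT t X p q = (σT ^ t) (X p q) := rfl

lemma sgM_zero_apply (X : MM n l) : sgM σT 0 X = X := by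
  funext p q; rw [sgM_apply, pow_zero]; rfl

lemma sgM_sgM (a b : ℕ) (X : MM n l) : sgM σT a (sgM σT b X) = sgM σT (a + b) X := by
  funext p q
  rw [sgM_apply, sgM_apply, sgM_apply, pow_add]; rfl

/-- Abbreviations for the hypotheses on the parity involution. -/
def PX : Prop := ∀ (i : Fin l) (a b : Fin n), σT (xT i a b) = xT i a b
def PXI : Prop := ∀ (i : Fin l) (a b : Fin n), σT (xiT i a b) = -xiT i a b

lemma sgM_Gm (hx : PX σT) (hxi : PXI σT) (i : Fin l) (k t : ℕ) :
    sgM σT t (Gm i k) = Gm i (k + t) := by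
  induction t with
  | zero => rw [sgM_zero_apply]; rfl
  | succ t ih =>
    have h1 : sgM σT (t+1) (Gm i k) = σT.mapMatrix (sgM σT t (Gm i k)) := by
      funext p q; rw [sgM_apply, pow_succ']; rfl
    rw [h1, ih]
    funext p q
    show σT (Gm i (k+t) p q) = Gm i (k+(t+1)) p q
    rw [Gm_apply, map_add, map_smul, hx, hxi, Gm_apply, smul_neg, ← neg_smul]
    congr 2
    rw [show k + (t+1) = (k+t)+1 from rfl, pow_succ]
    ring

/-! ### The σ-twisted convolution algebra of sequences of matrices -/

/-- σ-twisted convolution: `(a ⋆ b) r = Σ_{s+t=r} σ^t(a_s) b_t`. -/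
def cnv (a b : ℕ → MM n l) : ℕ → MM n l :=
  fun r => ∑ j ∈ range (r + 1), sgM σT j (a (r - j)) * b j

/-- The unit sequence. -/
def eS : ℕ → MM n l := fun r => if r = 0 then 1 else 0

lemma e_cnv (a : ℕ → MM n l) : cnv σT eS a = a := by
  funext r
  rw [cnv, Finset.sum_eq_single r]
  · rw [Nat.sub_self]
    show sgM σT r (1 : MM n l) * a r = a r
    rw [map_one, one_mul]
  · intro b hb hbr
    have h1 : r - b ≠ 0 := by simp only [mem_range] at hb; omega
    show sgM σT b (eS (r-b)) * a b = 0
    rw [show eS (r-b) = 0 from if_neg h1, map_zero, zero_mul]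
  · intro h; exact absurd (self_mem_range_succ r) h

lemma cnv_assoc (a b c : ℕ → MM n l) :
    cnv σT (cnv σT a b) c = cnv σT a (cnv σT b c) := by
  funext r
  show (∑ k ∈ range (r+1), sgM σT k (cnv σT a b (r-k)) * c k)
      = ∑ m ∈ range (r+1), sgM σT m (a (r-m)) * cnv σT b c m
  have hL : ∀ k ∈ range (r+1), sgM σT k (cnv σT a b (r-k)) * c k
      = ∑ j ∈ range (r-k+1), sgM σT (k+j) (a (r-k-j)) * (sgM σT k (b j) * c k) := by
    intro k _
    rw [cnv, map_sum, Finset.sum_mul]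
    refine Finset.sum_congr rfl fun j _ => ?_
    rw [map_mul, sgM_sgM, mul_assoc]
  have hR : ∀ m ∈ range (r+1), sgM σT m (a (r-m)) * cnv σT b c m
      = ∑ k ∈ range (m+1), sgM σT m (a (r-m)) * (sgM σT k (b (m-k)) * c k) := by
    intro m _
    rw [cnv, Finset.mul_sum]
  rw [Finset.sum_congr rfl hL, Finset.sum_congr rfl hR,
    Finset.sum_sigma', Finset.sum_sigma']
  refine Finset.sum_nbij' (fun x => ⟨x.1 + x.2, x.1⟩) (fun y => ⟨y.2, y.1 - y.2⟩)
    ?_ ?_ ?_ ?_ ?_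
  · rintro ⟨k, j⟩ hm
    simp only [mem_sigma, mem_range] at hm ⊢
    omega
  · rintro ⟨m, k⟩ hm
    simp only [mem_sigma, mem_range] at hm ⊢
    omega
  · rintro ⟨k, j⟩ hm
    simp only [mem_sigma, mem_range] at hm
    have e2 : k + j - k = j := by omega
    simp [e2]
  · rintro ⟨m, k⟩ hm
    simp only [mem_sigma, mem_range] at hm
    have e2 : k + (m - k) = m := by omega
    simp [e2]
  · rintro ⟨k, j⟩ hm
    simp only [mem_sigma, mem_range] at hm
    have e1 : r - k - j = r - (k + j) := by omega
    have e2 : k + j - k = j := by omega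
    rw [e1, e2]

/-! ### Per-slot sequences and the telescoping inverse -/

/-- The per-slot sequence `1 + u·G_i`. -/
def gS (i : Fin l) : ℕ → MM n l :=
  fun t => if t = 0 then 1 else if t = 1 then Gm i 0 else 0

/-- Twisted geometric series: `hh i s k` is the degree-`s` term of the inverse of
`1 + u·G_i`, with all twists shifted by `k`. -/
def hh (i : Fin l) : ℕ → ℕ → MM n l
  | 0, _ => 1
  | s+1, k => -(Gm i (s + k) * hh i s k)

def hS (i : Fin l) : ℕ → MM n l := fun s => hh i s 0

lemma sgM_hh (hx : PX σT) (hxi : PXI σT) (i : Fin l) (s k t : ℕ) :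
    sgM σT t (hh i s k) = hh i s (k + t) := by
  induction s with
  | zero => show sgM σT t 1 = 1; rw [map_one]
  | succ s ih =>
    show sgM σT t (-(Gm i (s+k) * hh i s k)) = -(Gm i (s + (k+t)) * hh i s (k+t))
    rw [map_neg, map_mul, ih, sgM_Gm σT hx hxi, add_assoc]

lemma hh_mul_Gm (i : Fin l) (s k : ℕ) :
    hh (n := n) i s (k+1) * Gm i k = -hh i (s+1) k := by
  induction s with
  | zero =>
    show (1 : MM n l) * Gm i k = -(-(Gm i (0 + k) * 1))
    rw [one_mul, neg_neg, mul_one, Nat.zero_add]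
  | succ s ih =>
    show -(Gm i (s + (k+1)) * hh i s (k+1)) * Gm i k = -(-(Gm i (s + 1 + k) * hh i (s+1) k))
    rw [show s + (k+1) = s + 1 + k by omega, neg_neg]
    calc -(Gm i (s+1+k) * hh i s (k+1)) * Gm i k
        = -(Gm i (s+1+k) * hh i s (k+1) * Gm i k) :=
          neg_mul (Gm i (s+1+k) * hh i s (k+1)) (Gm i k)
      _ = -(Gm i (s+1+k) * (hh i s (k+1) * Gm i k)) := by rw [mul_assoc]
      _ = -(Gm i (s+1+k) * -hh i (s+1) k) := by rw [ih]
      _ = -(-(Gm i (s+1+k) * hh i (s+1) k)) :=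
          congrArg Neg.neg (mul_neg (Gm i (s+1+k)) (hh i (s+1) k))
      _ = Gm i (s+1+k) * hh i (s+1) k := neg_neg (Gm i (s+1+k) * hh i (s+1) k)

lemma hh_eq_prod (i : Fin l) (s k : ℕ) :
    hh (n := n) i s k = ((-1:ℂ)^s) • (List.ofFn fun b : Fin s => Gm i (s - 1 - b.val + k)).prod := by
  induction s with
  | zero => show (1 : MM n l) = ((-1:ℂ)^0) • ([] : List (MM n l)).prod; simp
  | succ s ih =>
    show -(Gm i (s + k) * hh i s k) = _
    rw [ih, List.ofFn_succ, List.prod_cons]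
    simp only [Fin.val_zero, Fin.val_succ]
    rw [show s + 1 - 1 - 0 + k = s + k by omega]
    have h2 : (fun b : Fin s => Gm (n := n) i (s + 1 - 1 - (b.val + 1) + k))
        = fun b : Fin s => Gm i (s - 1 - b.val + k) := by
      funext b
      exact congrArg (Gm i) (by omega)
    rw [h2]
    set P := (List.ofFn fun b : Fin s => Gm (n := n) i (s - 1 - b.val + k)).prod with hP
    calc -(Gm i (s + k) * ((-1:ℂ)^s • P))
        = -((-1:ℂ)^s • (Gm i (s + k) * P)) :=
          congrArg Neg.neg (mul_smul_comm ((-1:ℂ)^s) (Gm i (s+k)) P)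
      _ = (-((-1:ℂ)^s)) • (Gm i (s + k) * P) := (neg_smul ((-1:ℂ)^s) (Gm i (s+k) * P)).symm
      _ = ((-1:ℂ)^(s+1)) • (Gm i (s + k) * P) :=
          congrArg (fun c : ℂ => c • (Gm i (s+k) * P)) (by rw [pow_succ]; ring)

/-- `h_i ⋆ g_i = e`. -/
lemma h_cnv_g (hx : PX σT) (hxi : PXI σT) (i : Fin l) : cnv σT (hS i) (gS i) = eS := by
  funext r
  match r with
  | 0 =>
    show ∑ j ∈ range 1, sgM σT j (hS i (0 - j)) * gS i j = eS 0
    rw [Finset.sum_range_one, sgM_zero_apply]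
    show hh i 0 0 * (1 : MM n l) = (1 : MM n l)
    rw [mul_one]; rfl
  | s+1 =>
    show ∑ j ∈ range (s+2), sgM σT j (hS i (s+1-j)) * gS i j = eS (s+1)
    have hsub : ({0, 1} : Finset ℕ) ⊆ range (s+2) := by
      intro x hx'; simp at hx'; simp; omega
    have hzero : ∀ x ∈ range (s+2), x ∉ ({0, 1} : Finset ℕ) →
        sgM σT x (hS i (s+1-x)) * gS i x = 0 := by
      intro x _ hx2
      simp only [mem_insert, mem_singleton] at hx2
      push_neg at hx2
      have : gS (n := n) i x = 0 := by
        rw [gS]; rw [if_neg hx2.1, if_neg hx2.2]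
      rw [this, mul_zero]
    rw [← Finset.sum_subset hsub hzero, Finset.sum_insert (by simp), Finset.sum_singleton]
    have hf0 : sgM σT 0 (hS i (s+1-0)) * gS i 0 = hh i (s+1) 0 := by
      rw [sgM_zero_apply]
      show hS i (s+1) * (1 : MM n l) = hh i (s+1) 0
      rw [mul_one]; rfl
    have hf1 : sgM σT 1 (hS i (s+1-1)) * gS i 1 = -hh i (s+1) 0 := by
      show sgM σT 1 (hS i s) * Gm i 0 = -hh i (s+1) 0
      rw [show hS i s = hh i s 0 from rfl, sgM_hh σT hx hxi]
      exact hh_mul_Gm i s 0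
    rw [hf0, hf1]
    have he : eS (n := n) (l := l) (s+1) = 0 := if_neg (by omega)
    rw [he]
    exact add_neg_cancel (hh i (s+1) 0)

/-! ### Folds over slot lists -/

def GofL : List (Fin l) → ℕ → MM n l
  | [] => eS
  | i :: L => cnv σT (gS i) (GofL L)

def HofL : List (Fin l) → ℕ → MM n l
  | [] => eS
  | i :: L => cnv σT (HofL L) (hS i)

/-- Telescoping: `H(L) ⋆ G(L) = e`. -/
lemma HG (hx : PX σT) (hxi : PXI σT) (L : List (Fin l)) :
    cnv σT (HofL σT L) (GofL σT L) = eS := by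
  induction L with
  | nil => exact e_cnv σT eS
  | cons i L ih =>
    show cnv σT (cnv σT (HofL σT L) (hS i)) (cnv σT (gS i) (GofL σT L)) = eS
    rw [cnv_assoc, ← cnv_assoc σT (hS i) (gS i) (GofL σT L), h_cnv_g σT hx hxi,
      e_cnv, ih]

/-! ### Chain sums -/

/-- Twisted chain product. -/
def TwP (t k : ℕ) (iv : Fin t → Fin l) : MM n l :=
  (List.ofFn fun a : Fin t => Gm (iv a) (t - 1 - a.val + k)).prod

/-- Sum over strictly increasing chains with values in `L`. -/
def IncM (L : List (Fin l)) (t : ℕ) : MM n l :=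
  ∑ iv : Fin t → Fin l,
    (if (∀ a b : Fin t, a < b → iv a < iv b) ∧ (∀ a, iv a ∈ L) then (1:ℂ) else 0) • TwP t 0 iv

/-- Sum over weakly decreasing chains with values in `L`. -/
def DecM (L : List (Fin l)) (s : ℕ) : MM n l :=
  ∑ iv : Fin s → Fin l,
    (if (∀ a b : Fin s, a ≤ b → iv b ≤ iv a) ∧ (∀ a, iv a ∈ L) then (1:ℂ) else 0) • TwP s 0 iv

lemma sgM_TwP (hx : PX σT) (hxi : PXI σT) (t k j : ℕ) (iv : Fin t → Fin l) :
    sgM σT j (TwP t k iv) = TwP t (k + j) iv := by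
  rw [TwP, map_list_prod, List.map_ofFn, TwP]
  refine congrArg List.prod (congrArg List.ofFn ?_)
  funext a
  show sgM σT j (Gm (iv a) (t - 1 - a.val + k)) = Gm (iv a) (t - 1 - a.val + (k + j))
  rw [sgM_Gm σT hx hxi, add_assoc]

lemma TwP_zero (k : ℕ) (iv : Fin 0 → Fin l) : TwP (n := n) 0 k iv = 1 := by
  rw [TwP, List.ofFn_zero, List.prod_nil]

lemma sum_fin_zero_fun {A : Type*} [AddCommMonoid A] (f : (Fin 0 → Fin l) → A) :
    ∑ iv : Fin 0 → Fin l, f iv = f (fun a => a.elim0) := by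
  have : Subsingleton (Fin 0 → Fin l) := ⟨fun f g => funext fun a => a.elim0⟩
  rw [Fintype.sum_subsingleton]

lemma IncM_zero (L : List (Fin l)) : IncM (n := n) L 0 = 1 := by
  rw [IncM, sum_fin_zero_fun]
  rw [if_pos ⟨fun a => a.elim0, fun a => a.elim0⟩, TwP_zero, one_smul]

lemma DecM_zero (L : List (Fin l)) : DecM (n := n) L 0 = 1 := by
  rw [DecM, sum_fin_zero_fun]
  rw [if_pos ⟨fun a => a.elim0, fun a => a.elim0⟩, TwP_zero, one_smul]

lemma IncM_nil_pos (t : ℕ) : IncM (n := n) ([] : List (Fin l)) (t+1) = 0 := by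
  rw [IncM]
  refine Finset.sum_eq_zero fun iv _ => ?_
  rw [if_neg, zero_smul]
  rintro ⟨-, hmem⟩
  exact absurd (hmem 0) List.not_mem_nil

lemma DecM_nil_pos (t : ℕ) : DecM (n := n) ([] : List (Fin l)) (t+1) = 0 := by
  rw [DecM]
  refine Finset.sum_eq_zero fun iv _ => ?_
  rw [if_neg, zero_smul]
  rintro ⟨-, hmem⟩
  exact absurd (hmem 0) List.not_mem_nil

/-! ### Matrix entries of products of matrices as path sums -/

lemma prod_entry : ∀ (t : ℕ) (Ms : Fin t → MM n l) (p q : Fin n),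
    (List.ofFn Ms).prod p q =
      ∑ c : Fin (t+1) → Fin n,
        (if c 0 = p ∧ c (Fin.last t) = q then (1:ℂ) else 0) •
          (List.ofFn fun a : Fin t => Ms a (c a.castSucc) (c a.succ)).prod := by
  intro t
  induction t with
  | zero =>
    intro Ms p q
    rw [List.ofFn_zero, List.prod_nil]
    have hbij : Function.Bijective (fun x : Fin n => (fun _ : Fin 1 => x)) := by
      constructor
      · intro x y hxy; exact congrFun hxy 0
      · intro c; exact ⟨c 0, funext fun a => by rw [Subsingleton.elim a 0]⟩
    rw [← Fintype.sum_bijective _ hbij _ _ (fun x => rfl)]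
    simp only [List.ofFn_zero, List.prod_nil]
    by_cases hpq : p = q
    · subst hpq
      rw [Matrix.one_apply_eq, Finset.sum_eq_single p]
      · rw [if_pos ⟨rfl, rfl⟩, one_smul]
      · intro x _ hxp; rw [if_neg (fun h => hxp h.1), zero_smul]
      · intro h; exact absurd (Finset.mem_univ p) h
    · rw [Matrix.one_apply_ne hpq]
      refine (Finset.sum_eq_zero fun x _ => ?_).symm
      rw [if_neg (fun h => hpq (h.1.symm.trans h.2)), zero_smul]
  | succ t ih =>
    intro Ms p q
    rw [List.ofFn_succ, List.prod_cons, Matrix.mul_apply]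
    have hbij : Function.Bijective
        (fun y : Fin n × (Fin (t+1) → Fin n) => (Fin.cons y.1 y.2 : Fin (t+2) → Fin n)) := by
      constructor
      · rintro ⟨x, w⟩ ⟨x', w'⟩ hcc
        have h1 : x = x' := by
          have := congrFun hcc 0; simpa [Fin.cons_zero] using this
        have h2 : w = w' := funext fun a => by
          have := congrFun hcc a.succ; simpa [Fin.cons_succ] using this
        rw [Prod.ext_iff]; exact ⟨h1, h2⟩
      · intro c; exact ⟨(c 0, Fin.tail c), Fin.cons_self_tail c⟩
    rw [← Fintype.sum_bijective _ hbij _ _ (fun y => rfl), Fintype.sum_prod_type]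
    have hterm : ∀ (x : Fin n) (c' : Fin (t+1) → Fin n),
        (if (Fin.cons x c' : Fin (t+2) → Fin n) 0 = p ∧
            (Fin.cons x c' : Fin (t+2) → Fin n) (Fin.last (t+1)) = q then (1:ℂ) else 0) •
          (List.ofFn fun a : Fin (t+1) =>
            Ms a ((Fin.cons x c' : Fin (t+2) → Fin n) a.castSucc)
              ((Fin.cons x c' : Fin (t+2) → Fin n) a.succ)).prod
        = (if x = p ∧ c' (Fin.last t) = q then (1:ℂ) else 0) •
            (Ms 0 x (c' 0) *
              (List.ofFn fun a : Fin t => Ms a.succ (c' a.castSucc) (c' a.succ)).prod) := by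
      intro x c'
      have e0 : (Fin.cons x c' : Fin (t+2) → Fin n) 0 = x := rfl
      have elast : (Fin.cons x c' : Fin (t+2) → Fin n) (Fin.last (t+1)) = c' (Fin.last t) := by
        rw [← Fin.succ_last, Fin.cons_succ]
      rw [e0, elast]
      have hl : (List.ofFn fun a : Fin (t+1) =>
            Ms a ((Fin.cons x c' : Fin (t+2) → Fin n) a.castSucc)
              ((Fin.cons x c' : Fin (t+2) → Fin n) a.succ))
          = Ms 0 x (c' 0) ::
              List.ofFn fun a : Fin t => Ms a.succ (c' a.castSucc) (c' a.succ) := by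
        rw [List.ofFn_succ]
        have hhead : Ms 0 ((Fin.cons x c' : Fin (t+2) → Fin n) (Fin.castSucc 0))
            ((Fin.cons x c' : Fin (t+2) → Fin n) (Fin.succ 0)) = Ms 0 x (c' 0) := by
          have h1 : (Fin.cons x c' : Fin (t+2) → Fin n) (Fin.castSucc 0) = x := rfl
          have h2 : (Fin.cons x c' : Fin (t+2) → Fin n) (Fin.succ 0) = c' 0 := by
            simp [Fin.cons_succ]
          rw [h1, h2]
        have htail : (fun a : Fin t => Ms a.succ
              ((Fin.cons x c' : Fin (t+2) → Fin n) ((a.succ : Fin (t+1)).castSucc))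
              ((Fin.cons x c' : Fin (t+2) → Fin n) ((a.succ : Fin (t+1)).succ)))
            = fun a : Fin t => Ms a.succ (c' a.castSucc) (c' a.succ) := by
          funext a
          have h1 : ((a.succ : Fin (t+1)).castSucc) = ((a.castSucc : Fin (t+1)).succ) :=
            Fin.ext (by simp)
          rw [h1, Fin.cons_succ, Fin.cons_succ]
        rw [hhead, htail]
      rw [hl, List.prod_cons]
    rw [Finset.sum_congr rfl fun x _ => Finset.sum_congr rfl fun c' _ => hterm x c']
    -- LHS: substitute ih and push the factor inside
    have hL2 : ∀ x : Fin n,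
        Ms 0 p x * (List.ofFn fun a : Fin t => Ms a.succ).prod x q
        = ∑ c' : Fin (t+1) → Fin n,
            (if c' 0 = x ∧ c' (Fin.last t) = q then (1:ℂ) else 0) •
              (Ms 0 p x *
                (List.ofFn fun a : Fin t => Ms a.succ (c' a.castSucc) (c' a.succ)).prod) := by
      intro x
      rw [ih (fun a => Ms a.succ) x q, Finset.mul_sum]
      refine Finset.sum_congr rfl fun c' _ => ?_
      rw [mul_smul_comm]
    have hR : (∑ x : Fin n, ∑ c' : Fin (t+1) → Fin n,
          (if x = p ∧ c' (Fin.last t) = q then (1:ℂ) else 0) •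
            (Ms 0 x (c' 0) *
              (List.ofFn fun a : Fin t => Ms a.succ (c' a.castSucc) (c' a.succ)).prod))
        = ∑ c' : Fin (t+1) → Fin n,
            (if c' (Fin.last t) = q then (1:ℂ) else 0) •
              (Ms 0 p (c' 0) *
                (List.ofFn fun a : Fin t => Ms a.succ (c' a.castSucc) (c' a.succ)).prod) := by
      rw [Finset.sum_eq_single p]
      · refine Finset.sum_congr rfl fun c' _ => ?_
        by_cases hq : c' (Fin.last t) = q
        · rw [if_pos ⟨rfl, hq⟩, if_pos hq]
        · rw [if_neg (fun h => hq h.2), if_neg hq]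
      · intro x _ hxp
        exact Finset.sum_eq_zero fun c' _ => by rw [if_neg (fun h => hxp h.1), zero_smul]
      · intro h; exact absurd (Finset.mem_univ p) h
    have hLx : ∀ c' : Fin (t+1) → Fin n,
        (∑ x : Fin n, (if c' 0 = x ∧ c' (Fin.last t) = q then (1:ℂ) else 0) •
            (Ms 0 p x *
              (List.ofFn fun a : Fin t => Ms a.succ (c' a.castSucc) (c' a.succ)).prod))
        = (if c' (Fin.last t) = q then (1:ℂ) else 0) •
            (Ms 0 p (c' 0) *
              (List.ofFn fun a : Fin t => Ms a.succ (c' a.castSucc) (c' a.succ)).prod) := by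
      intro c'
      rw [Finset.sum_eq_single (c' 0)]
      · by_cases hq : c' (Fin.last t) = q
        · rw [if_pos ⟨rfl, hq⟩, if_pos hq]
        · rw [if_neg (fun h => hq h.2), if_neg hq]
      · intro x _ hx0
        rw [if_neg (fun h => hx0 h.1.symm), zero_smul]
      · intro h; exact absurd (Finset.mem_univ (c' 0)) h
    rw [Finset.sum_congr rfl fun x _ => hL2 x, Finset.sum_comm,
      Finset.sum_congr rfl fun c' _ => hLx c']
    exact hR.symm
/-! ### Increasing chains: splitting off the smallest slot -/

lemma inc_split (i : Fin l) (L : List (Fin l)) (hi : ∀ j ∈ L, i < j) (t : ℕ) :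
    IncM (n := n) (i :: L) (t+1) = IncM L (t+1) + Gm i t * IncM L t := by
  have hiL : i ∉ L := fun h => lt_irrefl i (hi i h)
  have key : ∀ iv : Fin (t+1) → Fin l,
      (if (∀ a b : Fin (t+1), a < b → iv a < iv b) ∧ (∀ a, iv a ∈ i :: L)
          then (1:ℂ) else 0)
      = (if (∀ a b : Fin (t+1), a < b → iv a < iv b) ∧ (∀ a, iv a ∈ L)
          then (1:ℂ) else 0)
        + (if (∀ a b : Fin (t+1), a < b → iv a < iv b) ∧ iv 0 = i ∧
            (∀ a : Fin t, iv a.succ ∈ L) then (1:ℂ) else 0) := by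
    intro iv
    by_cases hSM : ∀ a b : Fin (t+1), a < b → iv a < iv b
    · by_cases h0 : iv 0 = i
      · have hnotL : ¬ (∀ a, iv a ∈ L) := fun h => hiL (h0 ▸ h 0)
        by_cases hc : ∀ a, iv a ∈ i :: L
        · have htail : ∀ a : Fin t, iv a.succ ∈ L := by
            intro a
            rcases List.mem_cons.mp (hc a.succ) with h | h
            · exfalso
              have h1 : iv 0 < iv a.succ := hSM 0 a.succ (Fin.succ_pos a)
              rw [h0, h] at h1
              exact lt_irrefl i h1
            · exact h
          rw [if_pos ⟨hSM, hc⟩, if_neg (fun p => hnotL p.2),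
            if_pos ⟨hSM, h0, htail⟩, zero_add]
        · rw [if_neg (fun p => hc p.2), if_neg (fun p => hnotL p.2), if_neg, add_zero]
          rintro ⟨-, -, htail⟩
          apply hc
          intro a
          refine Fin.cases ?_ ?_ a
          · rw [h0]; exact List.mem_cons_self
          · intro b; exact List.mem_cons_of_mem _ (htail b)
      · by_cases hc : ∀ a, iv a ∈ i :: L
        · have hall : ∀ a, iv a ∈ L := by
            intro a
            rcases List.mem_cons.mp (hc a) with h | h
            · exfalso
              have ha0 : a ≠ 0 := fun hz => h0 (by rw [← hz]; exact h)
              have h1 : iv 0 < i := by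
                have h2 := hSM 0 a (Fin.pos_iff_ne_zero.mpr ha0)
                rwa [h] at h2
              rcases List.mem_cons.mp (hc 0) with h' | h'
              · exact h0 h'
              · exact absurd (lt_trans (hi _ h') h1) (lt_irrefl i)
            · exact h
          rw [if_pos ⟨hSM, hc⟩, if_pos ⟨hSM, hall⟩, if_neg (fun p => h0 p.2.1), add_zero]
        · rw [if_neg (fun p => hc p.2),
            if_neg (fun p => hc fun a => List.mem_cons_of_mem _ (p.2 a)),
            if_neg (fun p => h0 p.2.1), add_zero]
    · rw [if_neg (fun p => hSM p.1), if_neg (fun p => hSM p.1),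
        if_neg (fun p => hSM p.1), add_zero]
  rw [IncM, Finset.sum_congr rfl (fun iv _ => by rw [key iv, add_smul]),
    Finset.sum_add_distrib]
  refine congrArg₂ (· + ·) rfl ?_
  have hbij : Function.Bijective
      (fun y : Fin l × (Fin t → Fin l) => (Fin.cons y.1 y.2 : Fin (t+1) → Fin l)) := by
    constructor
    · rintro ⟨x, w⟩ ⟨x', w'⟩ hcc
      have h1 : x = x' := by
        have := congrFun hcc 0; simpa [Fin.cons_zero] using this
      have h2 : w = w' := funext fun a => by
        have := congrFun hcc a.succ; simpa [Fin.cons_succ] using this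
      rw [Prod.ext_iff]; exact ⟨h1, h2⟩
    · intro c; exact ⟨(c 0, Fin.tail c), Fin.cons_self_tail c⟩
  rw [← Fintype.sum_bijective _ hbij _ _ (fun y => rfl), Fintype.sum_prod_type]
  refine (Finset.sum_eq_single i ?_ ?_).trans ?_
  · intro x _ hxi2
    refine Finset.sum_eq_zero fun w _ => ?_
    rw [if_neg, zero_smul]
    rintro ⟨-, h0, -⟩
    exact hxi2 (by rw [← h0]; rfl)
  · intro h; exact absurd (Finset.mem_univ i) h
  · rw [IncM, Finset.mul_sum]
    refine Finset.sum_congr rfl fun w _ => ?_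
    have hTwP : TwP (n := n) (t+1) 0 (Fin.cons i w) = Gm i t * TwP t 0 w := by
      rw [TwP, List.ofFn_succ, List.prod_cons, TwP]
      have hhead : Gm (n:=n) ((Fin.cons i w : Fin (t+1) → Fin l) (0 : Fin (t+1)))
          (t+1-1-((0 : Fin (t+1)) : ℕ)+0) = Gm i t := by
        rw [Fin.cons_zero]
        exact congrArg (Gm i) (by simp only [Fin.val_zero]; omega)
      have htail : (fun a : Fin t => Gm (n:=n)
            ((Fin.cons i w : Fin (t+1) → Fin l) a.succ) (t+1-1-((a.succ : Fin (t+1)) : ℕ)+0))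
          = fun a : Fin t => Gm (w a) (t-1-(a : ℕ)+0) := by
        funext a
        rw [Fin.cons_succ]
        exact congrArg (Gm (w a)) (by simp only [Fin.val_succ]; omega)
      rw [hhead, htail]
    rw [hTwP, mul_smul_comm]
    have hcondiff : ((∀ a b : Fin (t+1),
          a < b → (Fin.cons i w : Fin (t+1) → Fin l) a <
            (Fin.cons i w : Fin (t+1) → Fin l) b) ∧
        (Fin.cons i w : Fin (t+1) → Fin l) 0 = i ∧
        (∀ a : Fin t, (Fin.cons i w : Fin (t+1) → Fin l) a.succ ∈ L))
        ↔ ((∀ a b : Fin t, a < b → w a < w b) ∧ ∀ a, w a ∈ L) := by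
      constructor
      · rintro ⟨hSM, -, htail⟩
        refine ⟨fun a b hab => ?_, fun a => ?_⟩
        · have h3 := hSM a.succ b.succ (by rwa [Fin.succ_lt_succ_iff])
          rwa [Fin.cons_succ, Fin.cons_succ] at h3
        · have h3 := htail a; rwa [Fin.cons_succ] at h3
      · rintro ⟨hSM, hmem⟩
        refine ⟨fun a b hab => ?_, rfl, fun a => by rw [Fin.cons_succ]; exact hmem a⟩
        by_cases haz : a = 0
        · subst haz
          have hbz : b ≠ 0 := by
            intro h; subst h; exact absurd hab (lt_irrefl 0)
          rw [Fin.cons_zero, ← Fin.succ_pred b hbz, Fin.cons_succ]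
          exact hi _ (hmem _)
        · have hbz : b ≠ 0 := by
            intro h; subst h; exact absurd hab (Fin.not_lt_zero a)
          rw [← Fin.succ_pred a haz, ← Fin.succ_pred b hbz, Fin.cons_succ, Fin.cons_succ]
          refine hSM _ _ ?_
          have h1 : (a : ℕ) ≠ 0 := fun hh => haz (Fin.ext hh)
          rw [Fin.lt_def] at hab ⊢
          simp only [Fin.coe_pred]
          omega
    exact congrArg₂ (· • ·) (if_congr hcondiff rfl rfl) rfl

/-- `G(L)` is the sum over increasing chains, for `L` a sorted list. -/
lemma Gof_eq (hx : PX σT) (hxi : PXI σT) :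
    ∀ (L : List (Fin l)), L.Pairwise (· < ·) → ∀ t, GofL σT L t = IncM L t := by
  intro L
  induction L with
  | nil =>
    intro _ t
    match t with
    | 0 => show eS 0 = IncM [] 0; rw [IncM_zero]; rfl
    | t+1 =>
      show eS (t+1) = IncM [] (t+1)
      rw [IncM_nil_pos, eS, if_neg (by omega)]
  | cons i L ih =>
    intro hp t
    rw [List.pairwise_cons] at hp
    obtain ⟨hi, hL⟩ := hp
    match t with
    | 0 =>
      show cnv σT (gS i) (GofL σT L) 0 = IncM (i :: L) 0
      rw [IncM_zero, cnv, Finset.sum_range_one, sgM_zero_apply, Nat.sub_self]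
      show gS i 0 * GofL σT L 0 = 1
      rw [show gS (n := n) i 0 = 1 from rfl, one_mul, ih hL 0, IncM_zero]
    | t+1 =>
      show cnv σT (gS i) (GofL σT L) (t+1) = IncM (i :: L) (t+1)
      have hg : cnv σT (gS i) (GofL σT L) (t+1)
          = GofL σT L (t+1) + Gm i t * GofL σT L t := by
        rw [cnv]
        have hsub : ({t, t+1} : Finset ℕ) ⊆ range (t+2) := by
          intro x hx'; simp at hx'; simp; omega
        have hzero : ∀ x ∈ range (t+2), x ∉ ({t, t+1} : Finset ℕ) →
            sgM σT x (gS i (t+1-x)) * GofL σT L x = 0 := by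
          intro x hxr hx2
          simp only [mem_range] at hxr
          simp only [mem_insert, mem_singleton] at hx2
          push_neg at hx2
          have hg0 : gS (n := n) i (t+1-x) = 0 := by
            rw [gS]
            rw [if_neg (by omega), if_neg (by omega)]
          rw [hg0, map_zero, zero_mul]
        rw [← Finset.sum_subset hsub hzero, Finset.sum_insert (by simp), Finset.sum_singleton]
        have hf1 : sgM σT (t+1) (gS i (t+1-(t+1))) * GofL σT L (t+1) = GofL σT L (t+1) := by
          rw [Nat.sub_self, show gS (n := n) i 0 = 1 from rfl, map_one, one_mul]
        have hf2 : sgM σT t (gS i (t+1-t)) * GofL σT L t = Gm i t * GofL σT L t := by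
          rw [show t+1-t = 1 by omega, show gS (n := n) i 1 = Gm i 0 from rfl,
            sgM_Gm σT hx hxi, zero_add]
        rw [hf1, hf2, add_comm]
      rw [hg, ih hL, ih hL, inc_split i L hi]
/-! ### Decreasing chains: splitting off the block of smallest slots -/

def Blk (i : Fin l) (j : ℕ) : MM n l :=
  (List.ofFn fun b : Fin j => Gm i (j - 1 - (b:ℕ))).prod

lemma hS_eq (i : Fin l) (j : ℕ) : hS (n := n) i j = ((-1:ℂ)^j) • Blk i j := by
  show hh i j 0 = ((-1:ℂ)^j) • Blk i j
  rw [hh_eq_prod, Blk]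
  refine congrArg (((-1:ℂ)^j) • ·)
    (congrArg List.prod (congrArg List.ofFn (funext fun b => ?_)))
  exact congrArg (Gm i) (by omega)

lemma dec_split (i : Fin l) (L : List (Fin l)) (hi : ∀ j ∈ L, i < j) (s : ℕ) :
    DecM (n := n) (i :: L) s
      = ∑ j ∈ range (s+1),
          (∑ iv : Fin (s - j) → Fin l,
            (if (∀ a b : Fin (s-j), a ≤ b → iv b ≤ iv a) ∧ (∀ a, iv a ∈ L)
              then (1:ℂ) else 0) • TwP (s-j) j iv) * Blk i j := by
  have key : ∀ IV : Fin s → Fin l,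
      (if (∀ a b : Fin s, a ≤ b → IV b ≤ IV a) ∧ (∀ a, IV a ∈ i :: L) then (1:ℂ) else 0)
      = ∑ j ∈ range (s+1),
          (if ((∀ a b : Fin s, a ≤ b → IV b ≤ IV a) ∧ (∀ a, IV a ∈ i :: L)) ∧
            (∀ a : Fin s, IV a = i ↔ s - j ≤ (a:ℕ)) then (1:ℂ) else 0) := by
    intro IV
    by_cases hP : (∀ a b : Fin s, a ≤ b → IV b ≤ IV a) ∧ (∀ a, IV a ∈ i :: L)
    · obtain ⟨j0, hj0r, hj0⟩ : ∃ j0, j0 ≤ s ∧ ∀ a : Fin s, IV a = i ↔ s - j0 ≤ (a:ℕ) := by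
        by_cases hall : ∀ a : Fin s, IV a = i
        · refine ⟨s, le_refl s, fun a => ?_⟩
          simp only [Nat.sub_self]
          exact ⟨fun _ => Nat.zero_le _, fun _ => hall a⟩
        · push_neg at hall
          obtain ⟨a0, ha0⟩ := hall
          have hne : (univ.filter (fun a : Fin s => IV a ≠ i)).Nonempty :=
            ⟨a0, by simp [ha0]⟩
          set am := (univ.filter (fun a : Fin s => IV a ≠ i)).max' hne with ham
          have hamem : IV am ≠ i := by
            have h1 := (univ.filter (fun a : Fin s => IV a ≠ i)).max'_mem hne
            simp only [mem_filter] at h1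
            exact h1.2
          have hami : i < IV am := by
            rcases List.mem_cons.mp (hP.2 am) with h | h
            · exact absurd h hamem
            · exact hi _ h
          refine ⟨s - 1 - (am:ℕ), by omega, fun a => ?_⟩
          have hs1 : s - (s - 1 - (am:ℕ)) = (am:ℕ) + 1 := by have := am.isLt; omega
          rw [hs1]
          constructor
          · intro hIVa
            by_contra hcon
            push_neg at hcon
            have h1 : IV am ≤ IV a := hP.1 a am (by rw [Fin.le_def]; omega)
            rw [hIVa] at h1
            exact absurd (lt_of_lt_of_le hami h1) (lt_irrefl i)
          · intro hge
            by_contra hIVa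
            have h2 : a ∈ univ.filter (fun a : Fin s => IV a ≠ i) := by simp [hIVa]
            have h3 := Finset.le_max' _ a h2
            rw [Fin.le_def] at h3
            omega
      symm
      rw [if_pos hP, Finset.sum_eq_single j0]
      · rw [if_pos ⟨hP, hj0⟩]
      · intro b hb hbne
        rw [if_neg]
        rintro ⟨-, hb'⟩
        apply hbne
        have hbr : b ≤ s := by simp only [mem_range] at hb; omega
        have hm : s - b = s - j0 := by
          by_contra hne2
          rcases Nat.lt_or_ge (s - b) (s - j0) with h | h
          · have hlt : s - b < s := by omega
            have h1 := (hb' ⟨s-b, hlt⟩).mpr (by exact Nat.le_refl _)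
            have h2 : s - j0 ≤ s - b := (hj0 ⟨s-b, hlt⟩).mp h1
            omega
          · have hne3 : s - j0 < s - b := by omega
            have hlt : s - j0 < s := by omega
            have h1 := (hj0 ⟨s-j0, hlt⟩).mpr (by exact Nat.le_refl _)
            have h2 : s - b ≤ s - j0 := (hb' ⟨s-j0, hlt⟩).mp h1
            omega
        omega
      · intro habs; exact absurd (mem_range.mpr (by omega)) habs
    · rw [if_neg hP]
      symm
      refine Finset.sum_eq_zero fun j _ => ?_
      rw [if_neg (fun p => hP p.1)]
  have hfil : ∀ {α : Type} [Fintype α] (P : α → Prop) [DecidablePred P] (f : α → MM n l),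
      ∑ x : α, (if P x then (1:ℂ) else 0) • f x = ∑ x ∈ univ.filter P, f x := by
    intro α _ P _ f
    rw [Finset.sum_filter]
    exact Finset.sum_congr rfl fun x _ => ind_smul (f x)
  rw [DecM, Finset.sum_congr rfl (fun IV _ => by rw [key IV, Finset.sum_smul]),
    Finset.sum_comm]
  refine Finset.sum_congr rfl fun j hj => ?_
  have hjs : j ≤ s := by simp only [mem_range] at hj; omega
  rw [Finset.sum_mul,
    Finset.sum_congr rfl (fun iv _ => smul_mul_assoc
      (if (∀ a b : Fin (s-j), a ≤ b → iv b ≤ iv a) ∧ (∀ a, iv a ∈ L) then (1:ℂ) else 0)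
      (TwP (s-j) j iv) (Blk i j))]
  refine ((hfil (α := Fin s → Fin l) _ _).trans ?_).trans
    (hfil (α := Fin (s-j) → Fin l) _ _).symm
  refine Finset.sum_nbij'
    (fun IV (a : Fin (s-j)) => IV (Fin.castLE (Nat.sub_le s j) a))
    (fun iv (a : Fin s) => if h : (a : ℕ) < s - j then iv ⟨(a : ℕ), h⟩ else i)
    ?_ ?_ ?_ ?_ ?_
  · intro IV hIV
    simp only [mem_filter, mem_univ, true_and] at hIV ⊢
    obtain ⟨⟨hdec, hmem⟩, hbnd⟩ := hIV
    constructor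
    · intro a b hab
      exact hdec _ _ (by rw [Fin.le_def]; exact hab)
    · intro a
      have h1 : IV (Fin.castLE (Nat.sub_le s j) a) ≠ i := by
        intro he
        have h2 := (hbnd _).mp he
        have h3 := a.isLt
        have h4 : ((Fin.castLE (Nat.sub_le s j) a : Fin s) : ℕ) = (a : ℕ) := rfl
        omega
      rcases List.mem_cons.mp (hmem _) with h | h
      · exact absurd h h1
      · exact h
  · intro iv hiv
    simp only [mem_filter, mem_univ, true_and] at hiv ⊢
    obtain ⟨hdec, hmem⟩ := hiv
    refine ⟨⟨?_, ?_⟩, ?_⟩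
    · intro a b hab
      by_cases hb : (b : ℕ) < s - j
      · have ha : (a : ℕ) < s - j := by
          have := Fin.le_def.mp hab; omega
        rw [dif_pos ha, dif_pos hb]
        exact hdec ⟨(a:ℕ), ha⟩ ⟨(b:ℕ), hb⟩ (by rw [Fin.le_def]; exact Fin.le_def.mp hab)
      · rw [dif_neg hb]
        by_cases ha : (a:ℕ) < s - j
        · rw [dif_pos ha]; exact le_of_lt (hi _ (hmem ⟨(a:ℕ), ha⟩))
        · rw [dif_neg ha]
    · intro a
      by_cases ha : (a:ℕ) < s - j
      · rw [dif_pos ha]; exact List.mem_cons_of_mem _ (hmem _)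
      · rw [dif_neg ha]; exact List.mem_cons_self
    · intro a
      by_cases ha : (a:ℕ) < s - j
      · rw [dif_pos ha]
        exact ⟨fun he => absurd he ((hi _ (hmem _)).ne'), fun hge => by omega⟩
      · rw [dif_neg ha]
        exact ⟨fun _ => by omega, fun _ => rfl⟩
  · intro IV hIV
    simp only [mem_filter, mem_univ, true_and] at hIV
    obtain ⟨⟨hdec, hmem⟩, hbnd⟩ := hIV
    funext a
    show (if h : (a:ℕ) < s - j
        then IV (Fin.castLE (Nat.sub_le s j) ⟨(a:ℕ), h⟩) else i) = IV a
    by_cases ha : (a:ℕ) < s - j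
    · rw [dif_pos ha]; exact congrArg IV (Fin.ext rfl)
    · rw [dif_neg ha]; exact ((hbnd a).mpr (by omega)).symm
  · intro iv _
    funext a
    have ha : ((Fin.castLE (Nat.sub_le s j) a : Fin s) : ℕ) < s - j := a.isLt
    show (if h : ((Fin.castLE (Nat.sub_le s j) a : Fin s) : ℕ) < s - j
        then iv ⟨((Fin.castLE (Nat.sub_le s j) a : Fin s) : ℕ), h⟩ else i) = iv a
    rw [dif_pos ha]
    exact congrArg iv (Fin.ext rfl)
  · intro IV hIV
    simp only [mem_filter, mem_univ, true_and] at hIV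
    obtain ⟨⟨hdec, hmem⟩, hbnd⟩ := hIV
    show TwP s 0 IV = TwP (s-j) j (fun a => IV (Fin.castLE (Nat.sub_le s j) a)) * Blk i j
    rw [TwP, prod_ofFn_split (Nat.sub_le s j) (fun a : Fin s => Gm (IV a) (s-1-(a:ℕ)+0))]
    congr 1
    · rw [TwP]
      refine congrArg List.prod (congrArg List.ofFn (funext fun a => ?_))
      refine congrArg (Gm (IV (Fin.castLE (Nat.sub_le s j) a))) ?_
      have hval : ((Fin.castLE (Nat.sub_le s j) a : Fin s) : ℕ) = (a : ℕ) := rfl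
      rw [hval]
      have := a.isLt
      omega
    · have hfun : (fun b : Fin (s - (s-j)) =>
          (fun v : ℕ => if hv : v < s then Gm (n:=n) (IV ⟨v, hv⟩) (s-1-v+0) else 1)
            ((s-j) + (b:ℕ)))
          = fun b : Fin (s - (s-j)) => Gm (n:=n) i (j-1-(b:ℕ)) := by
        funext b
        have hb := b.isLt
        have hv : (s-j) + (b:ℕ) < s := by omega
        show (if hv' : (s-j) + (b:ℕ) < s
            then Gm (n:=n) (IV ⟨(s-j)+(b:ℕ), hv'⟩) (s-1-((s-j)+(b:ℕ))+0) else 1) = _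
        rw [dif_pos hv]
        have hIVi : IV ⟨(s-j)+(b:ℕ), hv⟩ = i :=
          (hbnd _).mpr (Nat.le_add_right _ _)
        rw [hIVi]
        exact congrArg (Gm i) (by omega)
      rw [hfun, Blk]
      exact congrArg List.prod (ofFn_val_eq (fun v => Gm (n:=n) i (j-1-v)) (by omega))

/-- `H(L)` is the signed sum over decreasing chains, for `L` a sorted list. -/
lemma Hof_eq (hx : PX σT) (hxi : PXI σT) :
    ∀ (L : List (Fin l)), L.Pairwise (· < ·) → ∀ s,
      HofL σT L s = ((-1:ℂ)^s) • DecM L s := by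
  intro L
  induction L with
  | nil =>
    intro _ s
    match s with
    | 0 =>
      show eS 0 = ((-1:ℂ)^0) • DecM [] 0
      rw [DecM_zero, pow_zero, one_smul]; rfl
    | s+1 =>
      show eS (s+1) = ((-1:ℂ)^(s+1)) • DecM [] (s+1)
      rw [DecM_nil_pos, smul_zero, eS, if_neg (by omega)]
  | cons i L ih =>
    intro hp s
    rw [List.pairwise_cons] at hp
    obtain ⟨hi, hL⟩ := hp
    show cnv σT (HofL σT L) (hS i) s = ((-1:ℂ)^s) • DecM (i :: L) s
    rw [cnv]
    have hterm : ∀ j ∈ range (s+1),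
        sgM σT j (HofL σT L (s-j)) * hS i j
        = ((-1:ℂ)^s) • ((∑ iv : Fin (s-j) → Fin l,
            (if (∀ a b : Fin (s-j), a ≤ b → iv b ≤ iv a) ∧ (∀ a, iv a ∈ L)
              then (1:ℂ) else 0) • TwP (s-j) j iv) * Blk i j) := by
      intro j hj
      have hjs : j ≤ s := by simp only [mem_range] at hj; omega
      rw [ih hL (s-j), hS_eq, map_smul, smul_mul_assoc, mul_smul_comm, smul_smul]
      have hc : ((-1:ℂ)^(s-j)) * ((-1:ℂ)^j) = (-1:ℂ)^s := by
        rw [← pow_add]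
        congr 1
        omega
      rw [hc]
      congr 1
      congr 1
      rw [DecM, map_sum]
      refine Finset.sum_congr rfl fun iv _ => ?_
      rw [map_smul, sgM_TwP σT hx hxi, zero_add]
    rw [Finset.sum_congr rfl hterm, ← Finset.smul_sum, ← dec_split i L hi s]
/-! ### Identification with `chainProdInc` / `chainProdDec` -/

lemma chainProdInc_eq (t : ℕ) (pp qq : Fin n) :
    chainProdInc n l t pp qq = IncM (List.finRange l) t pp qq := by
  symm
  rw [IncM, Matrix.sum_apply]
  have h1 : ∀ iv : Fin t → Fin l,
      ((if ((∀ a b : Fin t, a < b → iv a < iv b) ∧ (∀ a, iv a ∈ List.finRange l))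
          then (1:ℂ) else 0) • TwP t 0 iv) pp qq
      = ∑ c : Fin (t+1) → Fin n,
          (if (c 0 = pp ∧ c (Fin.last t) = qq ∧ (∀ a b : Fin t, a < b → iv a < iv b))
              then (1:ℂ) else 0) •
            (List.ofFn fun a : Fin t => xT (iv a) (c a.castSucc) (c a.succ) +
              ((-1:ℂ)^(t-1-(a:ℕ))) • xiT (iv a) (c a.castSucc) (c a.succ)).prod := by
    intro iv
    rw [Matrix.smul_apply, TwP, prod_entry, Finset.smul_sum]
    refine Finset.sum_congr rfl fun c _ => ?_
    rw [indmul, ind_smul]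
    have hprod : (List.ofFn fun a : Fin t =>
          (Gm (iv a) (t-1-(a:ℕ)+0) : MM n l) (c a.castSucc) (c a.succ))
        = List.ofFn fun a : Fin t => xT (iv a) (c a.castSucc) (c a.succ) +
            ((-1:ℂ)^(t-1-(a:ℕ))) • xiT (iv a) (c a.castSucc) (c a.succ) := by
      refine congrArg List.ofFn (funext fun a => ?_)
      show xT (iv a) (c a.castSucc) (c a.succ) +
          ((-1:ℂ)^(t-1-(a:ℕ)+0)) • xiT (iv a) (c a.castSucc) (c a.succ) = _
      rw [Nat.add_zero]
    rw [hprod]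
    refine if_congr ?_ rfl rfl
    constructor
    · rintro ⟨⟨hmono, -⟩, h0, hlast⟩; exact ⟨h0, hlast, hmono⟩
    · rintro ⟨h0, hlast, hmono⟩
      exact ⟨⟨hmono, fun a => List.mem_finRange _⟩, h0, hlast⟩
  rw [Finset.sum_congr rfl (fun iv _ => h1 iv), Finset.sum_comm]
  rfl

lemma chainProdDec_eq (t : ℕ) (pp qq : Fin n) :
    chainProdDec n l t pp qq = DecM (List.finRange l) t pp qq := by
  symm
  rw [DecM, Matrix.sum_apply]
  have h1 : ∀ iv : Fin t → Fin l,
      ((if ((∀ a b : Fin t, a ≤ b → iv b ≤ iv a) ∧ (∀ a, iv a ∈ List.finRange l))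
          then (1:ℂ) else 0) • TwP t 0 iv) pp qq
      = ∑ c : Fin (t+1) → Fin n,
          (if (c 0 = pp ∧ c (Fin.last t) = qq ∧ (∀ a b : Fin t, a ≤ b → iv b ≤ iv a))
              then (1:ℂ) else 0) •
            (List.ofFn fun a : Fin t => xT (iv a) (c a.castSucc) (c a.succ) +
              ((-1:ℂ)^(t-1-(a:ℕ))) • xiT (iv a) (c a.castSucc) (c a.succ)).prod := by
    intro iv
    rw [Matrix.smul_apply, TwP, prod_entry, Finset.smul_sum]
    refine Finset.sum_congr rfl fun c _ => ?_
    rw [indmul, ind_smul]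
    have hprod : (List.ofFn fun a : Fin t =>
          (Gm (iv a) (t-1-(a:ℕ)+0) : MM n l) (c a.castSucc) (c a.succ))
        = List.ofFn fun a : Fin t => xT (iv a) (c a.castSucc) (c a.succ) +
            ((-1:ℂ)^(t-1-(a:ℕ))) • xiT (iv a) (c a.castSucc) (c a.succ) := by
      refine congrArg List.ofFn (funext fun a => ?_)
      show xT (iv a) (c a.castSucc) (c a.succ) +
          ((-1:ℂ)^(t-1-(a:ℕ)+0)) • xiT (iv a) (c a.castSucc) (c a.succ) = _
      rw [Nat.add_zero]
    rw [hprod]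
    refine if_congr ?_ rfl rfl
    constructor
    · rintro ⟨⟨hmono, -⟩, h0, hlast⟩; exact ⟨h0, hlast, hmono⟩
    · rintro ⟨h0, hlast, hmono⟩
      exact ⟨⟨hmono, fun a => List.mem_finRange _⟩, h0, hlast⟩
  rw [Finset.sum_congr rfl (fun iv _ => h1 iv), Finset.sum_comm]
  rfl

end S19

open S19 Finset

/-- Let `n, l ≥ 1`, `1 ≤ p,q ≤ n` and `r ≥ 1`.  Then in
`U(Q(n))^{⊗l}`:
`Σ_{s+t=r} Σ_{j=1}^n ((-1)^s z^{(s)}_{j,p} + (-1)^r z^{(s)}_{-j,p}) (z̃^{(t)}_{q,j} + z̃^{(t)}_{-q,j}) = 0`,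
where the even/odd components defining `z`, `z̃` are taken w.r.t. the parity involution
`σT` of `U(Q(n))^{⊗l}`. -/
theorem statement19 (n l : ℕ) (hn : 0 < n) (hl : 0 < l) (p q : Fin n)
    (r : ℕ) (hr : 1 ≤ r)
    (σT : TQ n l →ₐ[ℂ] TQ n l)
    (hσTx : ∀ (i : Fin l) (a b : Fin n), σT (xT i a b) = xT i a b)
    (hσTxi : ∀ (i : Fin l) (a b : Fin n), σT (xiT i a b) = -xiT i a b) :
    ∑ s : Fin (r + 1), ∑ j : Fin n,
      (((-1 : ℂ) ^ s.val) • zDec σT s.val false j p +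
        ((-1 : ℂ) ^ r) • zDec σT s.val true j p) *
      (zInc σT (r - s.val) false q j + zInc σT (r - s.val) true q j) = 0 := by
    classical
  have hpair : (List.finRange l).Pairwise (· < ·) := List.pairwise_lt_finRange l
  have hσσ : ∀ x : TQ n l, σT (σT x) = x := by
    have hext : σT.comp σT = AlgHom.id ℂ (TQ n l) := by
      apply RingQuot.ringQuot_ext'
      apply FreeAlgebra.hom_ext
      funext g
      cases g with
      | X i a b =>
        show σT (σT (xT i a b)) = xT i a b
        rw [hσTx, hσTx]
      | Xi i a b =>
        show σT (σT (xiT i a b)) = xiT i a b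
        rw [hσTxi, map_neg, hσTxi, neg_neg]
    intro x
    have h2 := DFunLike.congr_fun hext x
    simpa using h2
  have hpow : ∀ (t : ℕ) (x : TQ n l), (σT ^ t) x = if Even t then x else σT x := by
    intro t
    induction t with
    | zero => intro x; rw [pow_zero, if_pos Even.zero]; rfl
    | succ t ih =>
      intro x
      have h1 : (σT ^ (t+1)) x = σT ((σT ^ t) x) := by rw [pow_succ']; rfl
      rw [h1, ih]
      by_cases he : Even t
      · rw [if_pos he, if_neg (by simp [Nat.even_add_one, he])]
      · rw [if_neg he, if_pos (by simp [Nat.even_add_one, he]), hσσ]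
  have hB : ∀ (s : Fin (r+1)) (j : Fin n),
      zInc σT (r - s.val) false q j + zInc σT (r - s.val) true q j
        = IncM (List.finRange l) (r - s.val) j q := by
    intro s j
    cases ht : r - s.val with
    | zero =>
      rw [IncM_zero]
      show algebraMap ℂ (TQ n l) (kd q j) + (0 : TQ n l) = (1 : MM n l) j q
      rw [add_zero, Matrix.one_apply]
      unfold kd
      by_cases hqj : j = q
      · subst hqj; rw [if_pos rfl, if_pos rfl, map_one]
      · rw [if_neg (fun h => hqj h.symm), if_neg hqj, map_zero]
    | succ u =>
      have hfalse : zInc σT (u+1) false q j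
          = (2⁻¹:ℂ) • (chainProdInc n l (u+1) j q +
              (1:ℂ) • σT (chainProdInc n l (u+1) j q)) := by
        show (2⁻¹:ℂ) • (chainProdInc n l (u+1) j q +
            (if false then (-1:ℂ) else 1) • σT (chainProdInc n l (u+1) j q)) = _
        norm_num
      have htrue : zInc σT (u+1) true q j
          = (2⁻¹:ℂ) • (chainProdInc n l (u+1) j q +
              (-1:ℂ) • σT (chainProdInc n l (u+1) j q)) := by
        show (2⁻¹:ℂ) • (chainProdInc n l (u+1) j q +
            (if true then (-1:ℂ) else 1) • σT (chainProdInc n l (u+1) j q)) = _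
        norm_num
      rw [hfalse, htrue]
      have hcomb : ∀ X Y : TQ n l,
          (2⁻¹:ℂ) • (X + (1:ℂ) • Y) + (2⁻¹:ℂ) • (X + (-1:ℂ) • Y) = X := by
        intro X Y; module
      rw [hcomb, chainProdInc_eq]
  have hA : ∀ (s : Fin (r+1)) (j : Fin n),
      ((-1:ℂ)^s.val) • zDec σT s.val false j p + ((-1:ℂ)^r) • zDec σT s.val true j p
        = ((-1:ℂ)^s.val) •
            ((σT ^ (r - s.val)) (DecM (List.finRange l) s.val p j)) := by
    intro s j
    have hslt := s.isLt
    cases hs : s.val with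
    | zero =>
      show (((-1:ℂ)^0) • zDec σT 0 false j p + ((-1:ℂ)^r) • zDec σT 0 true j p) = _
      have hz1 : zDec σT 0 false j p = algebraMap ℂ (TQ n l) (kd j p) := rfl
      have hz2 : zDec σT 0 true j p = 0 := rfl
      rw [hz1, hz2, smul_zero, add_zero, pow_zero, one_smul, one_smul, DecM_zero,
        Matrix.one_apply]
      unfold kd
      by_cases hpj : p = j
      · subst hpj
        rw [if_pos rfl, if_pos rfl, map_one, map_one]
      · rw [if_neg (fun h => hpj h.symm), if_neg hpj, map_zero, map_zero]
    | succ u =>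
      have hur : u + 1 ≤ r := by omega
      have hfalse : zDec σT (u+1) false j p
          = (2⁻¹:ℂ) • (chainProdDec n l (u+1) p j +
              (1:ℂ) • σT (chainProdDec n l (u+1) p j)) := by
        show (2⁻¹:ℂ) • (chainProdDec n l (u+1) p j +
            (if false then (-1:ℂ) else 1) • σT (chainProdDec n l (u+1) p j)) = _
        norm_num
      have htrue : zDec σT (u+1) true j p
          = (2⁻¹:ℂ) • (chainProdDec n l (u+1) p j +
              (-1:ℂ) • σT (chainProdDec n l (u+1) p j)) := by
        show (2⁻¹:ℂ) • (chainProdDec n l (u+1) p j +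
            (if true then (-1:ℂ) else 1) • σT (chainProdDec n l (u+1) p j)) = _
        norm_num
      rw [hfalse, htrue, ← chainProdDec_eq, hpow (r - (u+1)) (chainProdDec n l (u+1) p j)]
      have hrt : r = (u+1) + (r - (u+1)) := by omega
      rcases Nat.even_or_odd (r - (u+1)) with he | ho
      · rw [if_pos he]
        have hr1 : ((-1:ℂ)^r) = (-1:ℂ)^(u+1) := by
          rw [hrt, pow_add, Even.neg_one_pow he, mul_one]
        rw [hr1]
        have hcomb : ∀ X Y : TQ n l,
            ((-1:ℂ)^(u+1)) • ((2⁻¹:ℂ) • (X + (1:ℂ) • Y)) +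
              ((-1:ℂ)^(u+1)) • ((2⁻¹:ℂ) • (X + (-1:ℂ) • Y)) = ((-1:ℂ)^(u+1)) • X := by
          intro X Y; module
        exact hcomb _ _
      · rw [if_neg (Nat.not_even_iff_odd.mpr ho)]
        have hr1 : ((-1:ℂ)^r) = -((-1:ℂ)^(u+1)) := by
          rw [hrt, pow_add, Odd.neg_one_pow ho, mul_neg_one]
        rw [hr1]
        have hcomb : ∀ X Y : TQ n l,
            ((-1:ℂ)^(u+1)) • ((2⁻¹:ℂ) • (X + (1:ℂ) • Y)) +
              (-((-1:ℂ)^(u+1))) • ((2⁻¹:ℂ) • (X + (-1:ℂ) • Y)) = ((-1:ℂ)^(u+1)) • Y := by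
          intro X Y; module
        exact hcomb _ _
  have hsum : ∀ s : Fin (r+1),
      (∑ j : Fin n,
        (((-1 : ℂ) ^ s.val) • zDec σT s.val false j p +
          ((-1 : ℂ) ^ r) • zDec σT s.val true j p) *
        (zInc σT (r - s.val) false q j + zInc σT (r - s.val) true q j))
      = (sgM σT (r - s.val) (HofL σT (List.finRange l) s.val) *
          GofL σT (List.finRange l) (r - s.val)) p q := by
    intro s
    rw [Matrix.mul_apply]
    refine Finset.sum_congr rfl fun j _ => ?_
    rw [hA s j, hB s j, Gof_eq σT hσTx hσTxi _ hpair, Hof_eq σT hσTx hσTxi _ hpair,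
      map_smul, Matrix.smul_apply, smul_mul_assoc, smul_mul_assoc]
    rfl
  rw [Finset.sum_congr rfl (fun s _ => hsum s)]
  rw [Fin.sum_univ_eq_sum_range
    (fun k => (sgM σT (r-k) (HofL σT (List.finRange l) k) *
      GofL σT (List.finRange l) (r-k)) p q) (r+1)]
  have h2 : ∀ k ∈ range (r+1),
      (sgM σT (r-k) (HofL σT (List.finRange l) k) * GofL σT (List.finRange l) (r-k)) p q
      = (fun m => (sgM σT m (HofL σT (List.finRange l) (r-m)) *
          GofL σT (List.finRange l) m) p q) (r+1-1-k) := by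
    intro k hk
    simp only [mem_range] at hk
    show _ = (sgM σT (r+1-1-k) (HofL σT (List.finRange l) (r-(r+1-1-k))) *
        GofL σT (List.finRange l) (r+1-1-k)) p q
    rw [show r+1-1-k = r-k by omega, show r-(r-k) = k by omega]
  rw [Finset.sum_congr rfl h2,
    Finset.sum_range_reflect (fun m => (sgM σT m (HofL σT (List.finRange l) (r-m)) *
      GofL σT (List.finRange l) m) p q) (r+1)]
  have h5 : (∑ k ∈ range (r+1), (sgM σT k (HofL σT (List.finRange l) (r-k)) *
      GofL σT (List.finRange l) k) p q)
      = (cnv σT (HofL σT (List.finRange l)) (GofL σT (List.finRange l)) r) p q := by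
    rw [cnv, Matrix.sum_apply]
  rw [h5, HG σT hσTx hσTxi]
  show (eS r : MM n l) p q = 0
  rw [eS, if_neg (by omega)]
  rfl
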